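/- The four homogeneous cubic forms F₀=(s²+u²)(3u−8t), F₁=i(s²−u²)(3u−8t), F₂=−6is(u²−6tu+8t²), F₃=20st(u−3t) in ℂ[s,t,u] have no common non-constant divisor. -/

import Mathlib

open MvPolynomial

noncomputable section

private lemma primeX0' : Prime (X 0 : MvPolynomial (Fin 3) ℂ) := by
  rw [← MulEquiv.prime_iff (finSuccEquiv ℂ 2).toRingEquiv.toMulEquiv]
  rw [show ((finSuccEquiv ℂ 2).toRingEquiv.toMulEquiv (X 0)) = Polynomial.X from finSuccEquiv_X_zero]
  exact Polynomial.prime_X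

private lemma primeX' (i : Fin 3) : Prime (X i : MvPolynomial (Fin 3) ℂ) := by
  rw [← MulEquiv.prime_iff (renameEquiv ℂ (Equiv.swap i (0 : Fin 3))).toRingEquiv.toMulEquiv]
  have : (renameEquiv ℂ (Equiv.swap i (0 : Fin 3))).toRingEquiv.toMulEquiv (X i)
      = (X 0 : MvPolynomial (Fin 3) ℂ) := by
    simp [renameEquiv, rename_X]
  rw [this]
  exact primeX0'

private def fwd' : MvPolynomial (Fin 3) ℂ →ₐ[ℂ] MvPolynomial (Fin 3) ℂ :=
  aeval (fun i => if i = 2 then X 2 - C (8/3 : ℂ) * X 1 else X i)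

private def bwd' : MvPolynomial (Fin 3) ℂ →ₐ[ℂ] MvPolynomial (Fin 3) ℂ :=
  aeval (fun i => if i = 2 then X 2 + C (8/3 : ℂ) * X 1 else X i)

private def lineq' : MvPolynomial (Fin 3) ℂ ≃ₐ[ℂ] MvPolynomial (Fin 3) ℂ :=
  AlgEquiv.ofAlgHom fwd' bwd'
    (by apply algHom_ext; intro i; fin_cases i <;> simp [fwd', bwd'])
    (by apply algHom_ext; intro i; fin_cases i <;> simp [fwd', bwd'])

private lemma prime_lin' : Prime ((3 : MvPolynomial (Fin 3) ℂ) * X 2 - 8 * X 1) := by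
  have h2 : Prime (lineq'.toRingEquiv.toMulEquiv (X 2)) :=
    (MulEquiv.prime_iff lineq'.toRingEquiv.toMulEquiv).2 (primeX' 2)
  have he : lineq'.toRingEquiv.toMulEquiv (X 2)
      = (X 2 : MvPolynomial (Fin 3) ℂ) - C (8/3 : ℂ) * X 1 := by
    simp [lineq', fwd']
  rw [he] at h2
  have hassoc : Associated ((X 2 : MvPolynomial (Fin 3) ℂ) - C (8/3 : ℂ) * X 1)
      ((3 : MvPolynomial (Fin 3) ℂ) * X 2 - 8 * X 1) := by
    have : (3 : MvPolynomial (Fin 3) ℂ) * X 2 - 8 * X 1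
        = C (3:ℂ) * ((X 2 : MvPolynomial (Fin 3) ℂ) - C (8/3 : ℂ) * X 1) := by
      rw [mul_sub, ← mul_assoc, ← C_mul]
      norm_num
      simp [map_ofNat]
    rw [this]
    exact associated_unit_mul_right _ _
      ((isUnit_iff_ne_zero.mpr (by norm_num : (3:ℂ) ≠ 0)).map (C : ℂ →+* MvPolynomial (Fin 3) ℂ))
  exact hassoc.prime h2

end

theorem torus_parametrization_coprime :
    let s : MvPolynomial (Fin 3) ℂ := X 0
    let t : MvPolynomial (Fin 3) ℂ := X 1
    let u : MvPolynomial (Fin 3) ℂ := X 2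
    let F₀ := (s ^ 2 + u ^ 2) * (3 * u - 8 * t)
    let F₁ := C Complex.I * (s ^ 2 - u ^ 2) * (3 * u - 8 * t)
    let F₂ := C (-6 * Complex.I) * s * (u ^ 2 - 6 * t * u + 8 * t ^ 2)
    let F₃ := 20 * s * t * (u - 3 * t)
    ∀ g : MvPolynomial (Fin 3) ℂ,
      g ∣ F₀ → g ∣ F₁ → g ∣ F₂ → g ∣ F₃ → IsUnit g := by
  intro s t u F₀ F₁ F₂ F₃ g h0 h1 h2 h3
  simp only [s, t, u, F₀, F₁, F₂, F₃] at h0 h1 h2 h3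
  have hI : (C Complex.I : MvPolynomial (Fin 3) ℂ) * C Complex.I = -1 := by
    rw [← C_mul, Complex.I_mul_I]; simp
  have hc : (C (-6 * Complex.I) : MvPolynomial (Fin 3) ℂ) = -6 * C Complex.I := by
    rw [C_mul]; simp [map_ofNat]
  -- the combination A = 2 u² (3u-8t)
  have idA : ((X 0 : MvPolynomial (Fin 3) ℂ) ^ 2 + X 2 ^ 2) * (3 * X 2 - 8 * X 1)
      + C Complex.I * (C Complex.I * (X 0 ^ 2 - X 2 ^ 2) * (3 * X 2 - 8 * X 1))
      = 2 * (X 2 ^ 2 * (3 * X 2 - 8 * X 1)) := by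
    linear_combination (3 * (X 2 : MvPolynomial (Fin 3) ℂ) - 8 * X 1) * (X 0 ^ 2 - X 2 ^ 2) * hI
  have hA : g ∣ 2 * ((X 2 : MvPolynomial (Fin 3) ℂ) ^ 2 * (3 * X 2 - 8 * X 1)) := by
    rw [← idA]; exact dvd_add h0 (h1.mul_left _)
  -- the combination P = 60 s (u² - 10 t²)
  have idP : (10 * C Complex.I) * (C (-6 * Complex.I) * X 0 * ((X 2:MvPolynomial (Fin 3) ℂ) ^ 2 - 6 * X 1 * X 2 + 8 * X 1 ^ 2))
      + 18 * (20 * X 0 * X 1 * (X 2 - 3 * X 1))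
      = 60 * (X 0 * (X 2 ^ 2 - 10 * X 1 ^ 2)) := by
    rw [hc]
    linear_combination (-60 * ((X 0:MvPolynomial (Fin 3) ℂ) * (X 2 ^ 2 - 6 * X 1 * X 2 + 8 * X 1 ^ 2))) * hI
  have hP : g ∣ 60 * ((X 0 : MvPolynomial (Fin 3) ℂ) * (X 2 ^ 2 - 10 * X 1 ^ 2)) := by
    rw [← idP]; exact dvd_add (h2.mul_left _) (h3.mul_left _)
  set P : MvPolynomial (Fin 3) ℂ := 60 * (X 0 * (X 2 ^ 2 - 10 * X 1 ^ 2)) with hPdef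
  have hPne : P ≠ 0 := by
    intro h
    have := congrArg (eval ![1, 1, 0]) h
    simp [hPdef] at this
  by_contra hg
  have hg0 : g ≠ 0 := by rintro rfl; exact hPne (zero_dvd_iff.mp hP)
  obtain ⟨p, hpirr, hpg⟩ := WfDvdMonoid.exists_irreducible_factor hg hg0
  have hp : Prime p := UniqueFactorizationMonoid.irreducible_iff_prime.mp hpirr
  have hpA : p ∣ 2 * ((X 2 : MvPolynomial (Fin 3) ℂ) ^ 2 * (3 * X 2 - 8 * X 1)) := hpg.trans hA
  rcases hp.dvd_or_dvd hpA with h | h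
  · -- p divides the unit 2, absurd
    have htwo : IsUnit (2 : MvPolynomial (Fin 3) ℂ) := by
      have : IsUnit (C (2:ℂ) : MvPolynomial (Fin 3) ℂ) :=
        (isUnit_iff_ne_zero.mpr two_ne_zero).map (C : ℂ →+* MvPolynomial (Fin 3) ℂ)
      simpa [map_ofNat] using this
    exact hp.not_unit (isUnit_of_dvd_unit h htwo)
  · rcases hp.dvd_or_dvd h with h' | h'
    · -- p ∣ u²  ⇒  u ∣ P, contradiction at (1,1,0)
      have hx : p ∣ (X 2 : MvPolynomial (Fin 3) ℂ) := hp.dvd_of_dvd_pow h'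
      have hXg : (X 2 : MvPolynomial (Fin 3) ℂ) ∣ g :=
        (hp.associated_of_dvd (primeX' 2) hx).symm.dvd.trans hpg
      obtain ⟨q, hq⟩ := hXg.trans hP
      have := congrArg (eval ![1, 1, 0]) hq
      simp [hPdef] at this
    · -- p ∣ (3u - 8t)  ⇒  (3u-8t) ∣ P, contradiction at (1,3,8)
      have hXg : ((3 : MvPolynomial (Fin 3) ℂ) * X 2 - 8 * X 1) ∣ g :=
        (hp.associated_of_dvd prime_lin' h').symm.dvd.trans hpg
      obtain ⟨q, hq⟩ := hXg.trans hP
      have := congrArg (eval ![1, 3, 8]) hq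
      simp [hPdef] at this
      norm_num at this
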